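/- For any collection 𝒞 and any noise level i ≥ 1: NC_1(𝒞) < ∞ if and only if NC_i(𝒞) < ∞. -/

import Mathlib

open Set Classical

/-- The set of languages in `𝒞` consistent with sample `S` at noise level `i`. -/
def Consistent {U : Type*} (𝒞 : Set (Set U)) (S : Set U) (i : ℕ) : Set (Set U) :=
  {L | L ∈ 𝒞 ∧ (S \ L).encard ≤ (i : ℕ∞)}

/-- The noisy closure of `S` at noise level `i`. -/
noncomputable def NoisyClosure {U : Type*} (𝒞 : Set (Set U)) (S : Set U) (i : ℕ) : Set U :=
  if (Consistent 𝒞 S i).Nonempty then ⋂ L ∈ Consistent 𝒞 S i, L else ∅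

/-- The noisy closure dimension of `𝒞` at noise level `i`, as an extended natural. -/
noncomputable def NC {U : Type*} (𝒞 : Set (Set U)) (i : ℕ) : ℕ∞ :=
  ⨆ S ∈ {S : Set U | S.Finite ∧ (Consistent 𝒞 S i).Nonempty ∧
      (NoisyClosure 𝒞 S i).Finite}, S.encard

/-- `x` is an enumeration of `K` with noise level at most `i`. -/
def IsNoisyEnum {U : Type*} (K : Set U) (i : ℕ) (x : ℕ → U) : Prop :=
  Function.Injective x ∧ K ⊆ Set.range x ∧ (Set.range x \ K).encard ≤ (i : ℕ∞)

/-- The set of strings revealed up to and including time `t`. -/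
def seenSet {U : Type*} (x : ℕ → U) (t : ℕ) : Set U := x '' Set.Iic t

/-- The prefix `x₀, …, x_t` of the enumeration, as a list fed to the generator. -/
def prefixList {U : Type*} (x : ℕ → U) (t : ℕ) : List U := (List.range (t + 1)).map x

/-- `G` uniformly generates with noise level `i` for `𝒞`. -/
def UniformGen {U : Type*} (𝒞 : Set (Set U)) (i : ℕ) (G : List U → U) : Prop :=
  ∃ t0 : ℕ, ∀ K ∈ 𝒞, ∀ x : ℕ → U, IsNoisyEnum K i x →
    ∀ t ≥ t0, G (prefixList x t) ∈ K \ seenSet x t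

/-- `G` non-uniformly generates with noise level `i` for `𝒞`. -/
def NonUniformGen {U : Type*} (𝒞 : Set (Set U)) (i : ℕ) (G : List U → U) : Prop :=
  ∀ K ∈ 𝒞, ∃ t0 : ℕ, ∀ x : ℕ → U, IsNoisyEnum K i x →
    ∀ t ≥ t0, G (prefixList x t) ∈ K \ seenSet x t

/-- `G` uniformly noise-dependently generates for `𝒞`. -/
def UniformNoiseDepGen {U : Type*} (𝒞 : Set (Set U)) (G : List U → U) : Prop :=
  ∀ n : ℕ, ∃ t0 : ℕ, ∀ K ∈ 𝒞, ∀ x : ℕ → U, IsNoisyEnum K n x →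
    ∀ t ≥ t0, G (prefixList x t) ∈ K \ seenSet x t

/-- `G` non-uniformly noise-dependently generates for `𝒞`. -/
def NonUniformNoiseDepGen {U : Type*} (𝒞 : Set (Set U)) (G : List U → U) : Prop :=
  ∀ n : ℕ, ∀ K ∈ 𝒞, ∃ t0 : ℕ, ∀ x : ℕ → U, IsNoisyEnum K n x →
    ∀ t ≥ t0, G (prefixList x t) ∈ K \ seenSet x t

/-- The infinite "column" `B c` in the universe `ℕ × ℕ`. -/
def column (c : ℕ) : Set (ℕ × ℕ) := {p | p.1 = c}

/-- The collection of all nonempty unions of columns. -/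
def columnCollection : Set (Set (ℕ × ℕ)) :=
  {L | ∃ x : Set ℕ, x.Nonempty ∧ L = ⋃ c ∈ x, column c}

section NCProof

variable {U : Type*}

private lemma consistent_mono' (𝒞 : Set (Set U)) (S : Set U) {a b : ℕ} (h : a ≤ b) :
    Consistent 𝒞 S a ⊆ Consistent 𝒞 S b := fun M hM =>
  ⟨hM.1, hM.2.trans (by exact_mod_cast h)⟩

private lemma closure_mono' {𝒞 : Set (Set U)} {S T : Set U} {a b : ℕ}
    (hS : (Consistent 𝒞 S b).Nonempty)
    (hsub : Consistent 𝒞 S b ⊆ Consistent 𝒞 T a) :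
    NoisyClosure 𝒞 T a ⊆ NoisyClosure 𝒞 S b := by
  have hT : (Consistent 𝒞 T a).Nonempty := hS.mono hsub
  rw [NoisyClosure, if_pos hT, NoisyClosure, if_pos hS]
  intro x hx
  simp only [Set.mem_iInter] at hx ⊢
  exact fun L hL => hx L (hsub hL)

private lemma NC_def (𝒞 : Set (Set U)) (a : ℕ) :
    NC 𝒞 a = ⨆ S ∈ {S : Set U | S.Finite ∧ (Consistent 𝒞 S a).Nonempty ∧
      (NoisyClosure 𝒞 S a).Finite}, S.encard := rfl

private lemma encard_le_NC {𝒞 : Set (Set U)} {T : Set U} {a : ℕ} (h1 : T.Finite)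
    (h2 : (Consistent 𝒞 T a).Nonempty) (h3 : (NoisyClosure 𝒞 T a).Finite) :
    T.encard ≤ NC 𝒞 a := by
  rw [NC_def]
  exact le_iSup₂ (f := fun (S : Set U) (_ : S ∈ {S : Set U | S.Finite ∧
    (Consistent 𝒞 S a).Nonempty ∧ (NoisyClosure 𝒞 S a).Finite}) => S.encard) T ⟨h1, h2, h3⟩

private lemma crit {𝒞 : Set (Set U)} {S T : Set U} {a b : ℕ}
    (hSne : (Consistent 𝒞 S b).Nonempty) (hScl : (NoisyClosure 𝒞 S b).Finite)
    (hTfin : T.Finite) (hsub : Consistent 𝒞 S b ⊆ Consistent 𝒞 T a) :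
    T.encard ≤ NC 𝒞 a :=
  encard_le_NC hTfin (hSne.mono hsub) (hScl.subset (closure_mono' hSne hsub))

private lemma NC_mono' (𝒞 : Set (Set U)) {a b : ℕ} (h : a ≤ b) : NC 𝒞 a ≤ NC 𝒞 b := by
  rw [NC_def 𝒞 a]
  refine iSup₂_le fun S hS => ?_
  obtain ⟨h1, h2, h3⟩ := hS
  exact crit h2 h3 h1 (consistent_mono' 𝒞 S h)

private lemma exists_disjoint_chunks {α : Type*} (q : ℕ) :
    ∀ (p : ℕ) (S : Set α), ((p * q : ℕ) : ℕ∞) ≤ S.encard →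
    ∃ C : Fin p → Set α, (∀ i, C i ⊆ S) ∧ (∀ i, (C i).encard = q) ∧
      (∀ i j, i ≠ j → Disjoint (C i) (C j)) := by
  intro p
  induction p with
  | zero =>
    intro S _
    exact ⟨fun i => i.elim0, fun i => i.elim0, fun i => i.elim0, fun i => i.elim0⟩
  | succ p ih =>
    intro S hS
    have hq : ((q : ℕ) : ℕ∞) ≤ S.encard := by
      refine le_trans ?_ hS
      exact_mod_cast Nat.le_mul_of_pos_left q (Nat.succ_pos p)
    obtain ⟨T, hTsub, hTcard⟩ := Set.exists_subset_encard_eq hq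
    have hsum := Set.encard_diff_add_encard_of_subset hTsub
    rw [hTcard] at hsum
    have hrest : ((p * q : ℕ) : ℕ∞) ≤ (S \ T).encard := by
      have h1 : ((p * q : ℕ) : ℕ∞) + (q : ℕ∞) ≤ (S \ T).encard + (q : ℕ∞) := by
        rw [hsum]
        refine le_trans ?_ hS
        push_cast
        ring_nf
        exact le_refl _
      exact (WithTop.add_le_add_iff_right (ENat.coe_ne_top q)).mp h1
    obtain ⟨C', hC'sub, hC'card, hC'disj⟩ := ih (S \ T) hrest
    have hdT : ∀ j, Disjoint T (C' j) :=
      fun j => Set.disjoint_left.mpr fun x hxT hxC => ((hC'sub j) hxC).2 hxT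
    refine ⟨Fin.cons T C', ?_, ?_, ?_⟩
    · intro i
      refine Fin.cases ?_ (fun i' => ?_) i
      · simpa using hTsub
      · simp only [Fin.cons_succ]
        exact (hC'sub i').trans Set.diff_subset
    · intro i
      refine Fin.cases ?_ (fun i' => ?_) i
      · simpa using hTcard
      · simpa using hC'card i'
    · intro i j
      refine Fin.cases ?_ (fun i' => ?_) i <;> refine Fin.cases ?_ (fun j' => ?_) j <;>
        intro hij <;> simp only [Fin.cons_zero, Fin.cons_succ]
      · exact absurd rfl hij
      · exact hdT j'
      · exact (hdT i').symm
      · exact hC'disj i' j' fun h => hij (congrArg Fin.succ h)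

private lemma exists_disjoint_picks {α : Type*} (m : ℕ) :
    ∀ (p : ℕ) (Z : Fin p → Set α), (∀ i, (Z i).Infinite) →
    ∃ P : Fin p → Set α, (∀ i, P i ⊆ Z i) ∧ (∀ i, (P i).encard = m) ∧
      (∀ i j, i ≠ j → Disjoint (P i) (P j)) := by
  intro p
  induction p with
  | zero =>
    intro Z _
    exact ⟨fun i => i.elim0, fun i => i.elim0, fun i => i.elim0, fun i => i.elim0⟩
  | succ p ih =>
    intro Z hZ
    obtain ⟨P', h1, h2, h3⟩ := ih (fun j => Z j.succ) (fun j => hZ j.succ)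
    have hUfin : (⋃ j, P' j).Finite :=
      Set.finite_iUnion fun j => Set.finite_of_encard_eq_coe (h2 j)
    have hinf : (Z 0 \ ⋃ j, P' j).Infinite := (hZ 0).diff hUfin
    obtain ⟨P0, hP0sub, hP0card⟩ := Set.exists_subset_encard_eq
      (show ((m : ℕ) : ℕ∞) ≤ (Z 0 \ ⋃ j, P' j).encard by rw [hinf.encard_eq]; exact le_top)
    have hd0 : ∀ j, Disjoint P0 (P' j) :=
      fun j => Set.disjoint_left.mpr fun x hx0 hxj =>
        (hP0sub hx0).2 (Set.mem_iUnion.mpr ⟨j, hxj⟩)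
    refine ⟨Fin.cons P0 P', ?_, ?_, ?_⟩
    · intro i
      refine Fin.cases ?_ (fun i' => ?_) i
      · simpa using hP0sub.trans Set.diff_subset
      · simpa using h1 i'
    · intro i
      refine Fin.cases ?_ (fun i' => ?_) i
      · simpa using hP0card
      · simpa using h2 i'
    · intro i j
      refine Fin.cases ?_ (fun i' => ?_) i <;> refine Fin.cases ?_ (fun j' => ?_) j <;>
        intro hij <;> simp only [Fin.cons_zero, Fin.cons_succ]
      · exact absurd rfl hij
      · exact hd0 j'
      · exact (hd0 i').symm
      · exact h3 i' j' fun h => hij (congrArg Fin.succ h)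

private lemma encard_iUnion_disj {α : Type*} (m : ℕ) :
    ∀ (p : ℕ) (P : Fin p → Set α), (∀ i, (P i).encard = m) →
    (∀ i j, i ≠ j → Disjoint (P i) (P j)) →
    (⋃ i, P i).encard = ((p * m : ℕ) : ℕ∞) := by
  intro p
  induction p with
  | zero => intro P _ _; simp
  | succ p ih =>
    intro P hcard hdisj
    have hU : (⋃ i, P i) = P 0 ∪ ⋃ j, P (Fin.succ j) := by
      apply Set.Subset.antisymm
      · intro x hx
        obtain ⟨i, hi⟩ := Set.mem_iUnion.mp hx
        refine Fin.cases (fun h => Set.mem_union_left _ h)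
          (fun i' h => Set.mem_union_right _ (Set.mem_iUnion.mpr ⟨i', h⟩)) i hi
      · intro x hx
        rcases hx with hx | hx
        · exact Set.mem_iUnion.mpr ⟨0, hx⟩
        · obtain ⟨j, hj⟩ := Set.mem_iUnion.mp hx
          exact Set.mem_iUnion.mpr ⟨j.succ, hj⟩
    rw [hU, Set.encard_union_eq
      (Set.disjoint_iUnion_right.mpr fun j => hdisj 0 j.succ (Fin.succ_ne_zero j).symm),
      ih (fun j => P j.succ) (fun j => hcard j.succ)
        (fun a b hab => hdisj a.succ b.succ fun h => hab (Fin.succ_injective _ h)),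
      hcard 0]
    push_cast
    ring

private lemma NC_step (𝒞 : Set (Set U)) (m : ℕ) (hm : 1 ≤ m) (h : NC 𝒞 m < ⊤) :
    NC 𝒞 (m + 1) < ⊤ := by
  obtain ⟨k, hk⟩ : ∃ k : ℕ, NC 𝒞 m ≤ (k : ℕ∞) :=
    ⟨(NC 𝒞 m).toNat, (ENat.coe_toNat h.ne).symm.le⟩
  have key : NC 𝒞 (m + 1) ≤ (((k + 2) * (k + 1) : ℕ) : ℕ∞) := by
    rw [NC_def]
    refine iSup₂_le fun S hS => ?_
    obtain ⟨hSfin, hSne, hScl⟩ := hS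
    by_contra hgt
    push_neg at hgt
    obtain ⟨C, hCsub, hCcard, hCdisj⟩ := exists_disjoint_chunks (k + 1) (k + 2) S hgt.le
    have hCfin : ∀ i, (C i).Finite := fun i => Set.finite_of_encard_eq_coe (hCcard i)
    -- a chunk with a big defect absorbs the whole defect
    have defect : ∀ M, M ∈ Consistent 𝒞 S (m + 1) → ∀ i : Fin (k + 2),
        ¬ ((C i \ M).encard ≤ (m : ℕ∞)) → S \ M = C i \ M := by
      intro M hM i hbad
      push_neg at hbad
      have h1 : (m : ℕ∞) + 1 ≤ (C i \ M).encard :=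
        (ENat.add_one_le_iff (by simp)).mpr hbad
      have h2 : (S \ M).encard ≤ (m : ℕ∞) + 1 := by
        have := hM.2
        rwa [Nat.cast_add, Nat.cast_one] at this
      exact ((hSfin.diff : (S \ M).Finite).eq_of_subset_of_encard_le'
        (Set.diff_subset_diff_left (hCsub i)) (h2.trans h1)).symm
    by_cases hallgood : ∃ i, ∀ M ∈ Consistent 𝒞 S (m + 1), (C i \ M).encard ≤ (m : ℕ∞)
    · obtain ⟨i, hi⟩ := hallgood
      have hle := crit hSne hScl (hCfin i) (fun M hM => ⟨hM.1, hi M hM⟩)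
      rw [hCcard i] at hle
      have : ((k + 1 : ℕ) : ℕ∞) ≤ (k : ℕ∞) := hle.trans hk
      have : k + 1 ≤ k := by exact_mod_cast this
      omega
    · push_neg at hallgood
      -- each chunk has some consistent language at level m
      have hconsNE : ∀ i, (Consistent 𝒞 (C i) m).Nonempty := by
        intro i
        obtain ⟨j, hji⟩ : ∃ j : Fin (k + 2), j ≠ i := by
          by_cases h0 : i = 0
          · refine ⟨1, ?_⟩
            rw [h0]
            simp [Fin.ext_iff]
          · exact ⟨0, fun h => h0 h.symm⟩
        obtain ⟨M, hM, hbad⟩ := hallgood j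
        have hdef := defect M hM j (not_le.mpr hbad)
        have hempty : C i \ M = ∅ := by
          ext x
          simp only [Set.mem_diff, Set.mem_empty_iff_false, iff_false, not_and, not_not]
          intro hxCi
          by_contra hxM
          have hxS : x ∈ S \ M := ⟨hCsub i hxCi, hxM⟩
          rw [hdef] at hxS
          exact Set.disjoint_left.mp (hCdisj i j (Ne.symm hji)) hxCi hxS.1
        exact ⟨M, hM.1, by rw [hempty]; simp⟩
      have hZsubM : ∀ (i : Fin (k + 2)) M, M ∈ Consistent 𝒞 (C i) m →
          NoisyClosure 𝒞 (C i) m ⊆ M := by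
        intro i M hM
        rw [NoisyClosure, if_pos ⟨M, hM⟩]
        exact Set.biInter_subset_of_mem hM
      by_cases hallinf : ∀ i, (NoisyClosure 𝒞 (C i) m).Infinite
      · obtain ⟨P, hPsub, hPcard, hPdisj⟩ :=
          exists_disjoint_picks m (k + 2) (fun i => NoisyClosure 𝒞 (C i) m) hallinf
        set T := ⋃ i, P i with hT
        have hsub : Consistent 𝒞 S (m + 1) ⊆ Consistent 𝒞 T m := by
          intro M hM
          refine ⟨hM.1, ?_⟩
          by_cases hTM : T \ M = ∅
          · rw [hTM]; simp
          · obtain ⟨x, hx⟩ := Set.nonempty_iff_ne_empty.mpr hTM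
            obtain ⟨i, hxi⟩ := Set.mem_iUnion.mp hx.1
            have hMi : ¬ ((C i \ M).encard ≤ (m : ℕ∞)) := by
              intro hle
              exact hx.2 (hZsubM i M ⟨hM.1, hle⟩ (hPsub i hxi))
            have hdef := defect M hM i hMi
            have hTsub : T \ M ⊆ P i := by
              intro y hy
              obtain ⟨j, hyj⟩ := Set.mem_iUnion.mp hy.1
              by_cases hji : j = i
              · exact hji ▸ hyj
              · exfalso
                have hCjM : C j \ M = ∅ := by
                  ext z
                  simp only [Set.mem_diff, Set.mem_empty_iff_false, iff_false, not_and, not_not]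
                  intro hzCj
                  by_contra hzM
                  have hzS : z ∈ S \ M := ⟨hCsub j hzCj, hzM⟩
                  rw [hdef] at hzS
                  exact Set.disjoint_left.mp (hCdisj j i hji) hzCj hzS.1
                have hMj : M ∈ Consistent 𝒞 (C j) m := ⟨hM.1, by rw [hCjM]; simp⟩
                exact hy.2 (hZsubM j M hMj (hPsub j hyj))
            calc (T \ M).encard ≤ (P i).encard := Set.encard_mono hTsub
              _ = (m : ℕ∞) := hPcard i
        have hTfin : T.Finite :=
          Set.finite_iUnion fun i => Set.finite_of_encard_eq_coe (hPcard i)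
        have hle := crit hSne hScl hTfin hsub
        rw [hT, encard_iUnion_disj m (k + 2) P hPcard hPdisj] at hle
        have : (((k + 2) * m : ℕ) : ℕ∞) ≤ (k : ℕ∞) := hle.trans hk
        have hnat : (k + 2) * m ≤ k := by exact_mod_cast this
        have := Nat.mul_le_mul_left (k + 2) hm
        omega
      · push_neg at hallinf
        obtain ⟨i, hfin⟩ := hallinf
        have hle := encard_le_NC (hCfin i) (hconsNE i) hfin
        rw [hCcard i] at hle
        have : ((k + 1 : ℕ) : ℕ∞) ≤ (k : ℕ∞) := hle.trans hk
        have : k + 1 ≤ k := by exact_mod_cast this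
        omega
  exact lt_of_le_of_lt key (by exact WithTop.coe_lt_top _)

end NCProof

theorem stmt5 {U : Type*} [Countable U] (𝒞 : Set (Set U)) (i : ℕ) (hi : 1 ≤ i) :
    NC 𝒞 1 < ⊤ ↔ NC 𝒞 i < ⊤ := by
  constructor
  · intro h1
    have main : ∀ j, 1 ≤ j → NC 𝒞 j < ⊤ := by
      intro j
      induction j with
      | zero => intro h; exact absurd h (by omega)
      | succ j ih =>
        intro _
        by_cases hj : 1 ≤ j
        · exact NC_step 𝒞 j hj (ih hj)
        · have hj0 : j = 0 := by omega
          subst hj0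
          exact h1
    exact main i hi
  · intro h
    exact lt_of_le_of_lt (NC_mono' 𝒞 hi) h
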